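/- arXiv:1612.06220 — 2 statements merged into one kernel-verified Lean document; each statement's English description precedes it below -/
import Mathlib

section
/- Let G be a unimodular totally disconnected locally compact group, K a compact open subgroup of G, and H a closed unimodular subgroup of G such that G/H carries a G-invariant Radon measure μ. Normalize the left Haar measures vol_G on G and vol_H on H so that vol_G(K) = 1 and vol_H(K ∩ H) = 1, and normalize μ so that the orbit K·x₀ of the base point x₀ = H ∈ G/H has μ-measure 1. Then for every set Ω ⊆ G of representatives of the double cosets K\G/H one has μ(G/H) = Σ_{t ∈ Ω} 1 / vol_H(t⁻¹Kt ∩ H), where for each t the group t⁻¹Kt ∩ H is a compact open subgroup of H (so each summand is finite and the sum is a possibly infinite sum of positive reals). -/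
open MeasureTheory Pointwise ENNReal

namespace SerreAux

variable {X : Type*} [Group X] [TopologicalSpace X] [IsTopologicalGroup X]
  [MeasurableSpace X] [BorelSpace X]

theorem smul_set_eq_preimage (c : X) (S : Set X) :
    c • S = (fun x => c⁻¹ * x) ⁻¹' S := by
  ext x
  simp [Set.mem_smul_set_iff_inv_smul_mem]

/-- Measure of a compact set that is a union of left cosets of an open subgroup. -/
theorem haar_coset_partition (ν : Measure X) [ν.IsMulLeftInvariant]
    (V U : Subgroup X) (hUV : U ≤ V) (hVc : IsCompact (V : Set X))
    (hUo : IsOpen (U : Set X)) :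
    ν (V : Set X) = Nat.card (↥V ⧸ U.subgroupOf V) * ν (U : Set X) := by
  classical
  have hVcs : CompactSpace ↥V := isCompact_iff_compactSpace.mp hVc
  have hfin : Finite (↥V ⧸ U.subgroupOf V) :=
    Subgroup.quotient_finite_of_isOpen _ (by
      rw [Subgroup.coe_subgroupOf]
      exact hUo.preimage continuous_subtype_val)
  have := Fintype.ofFinite (↥V ⧸ U.subgroupOf V)
  set J := ↥V ⧸ U.subgroupOf V with hJ
  have hcover : (V : Set X) = ⋃ j : J, ((Quotient.out j : ↥V) : X) • (U : Set X) := by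
    ext g
    constructor
    · intro hg
      refine Set.mem_iUnion.2 ⟨(QuotientGroup.mk ⟨g, hg⟩ : J), ?_⟩
      have h1 := QuotientGroup.out_eq' ((QuotientGroup.mk ⟨g, hg⟩ : J))
      rw [QuotientGroup.eq] at h1
      rw [Subgroup.mem_subgroupOf] at h1
      rw [Set.mem_smul_set_iff_inv_smul_mem]
      simpa using h1
    · intro hg
      rcases Set.mem_iUnion.1 hg with ⟨j, hj⟩
      rcases hj with ⟨u, hu, rfl⟩
      exact mul_mem (Quotient.out j).2 (hUV hu)
  have hdisj : Pairwise (Function.onFun Disjoint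
      (fun j : J => ((Quotient.out j : ↥V) : X) • (U : Set X))) := by
    intro j j' hne
    rw [Function.onFun, Set.disjoint_left]
    rintro x hx hx'
    rw [Set.mem_smul_set_iff_inv_smul_mem] at hx hx'
    apply hne
    have hu1 : ((Quotient.out j : ↥V) : X)⁻¹ * x ∈ U := by simpa using hx
    have hu2 : ((Quotient.out j' : ↥V) : X)⁻¹ * x ∈ U := by simpa using hx'
    have key : ((Quotient.out j : ↥V) : X)⁻¹ * ((Quotient.out j' : ↥V) : X) ∈ U := by
      have := mul_mem hu1 (inv_mem hu2)
      simpa [mul_assoc, mul_inv_rev] using this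
    have hmem : (Quotient.out j)⁻¹ * (Quotient.out j') ∈ U.subgroupOf V :=
      Subgroup.mem_subgroupOf.2 (by push_cast; exact key)
    have heq := (QuotientGroup.eq (s := U.subgroupOf V)).2 hmem
    rw [QuotientGroup.out_eq', QuotientGroup.out_eq'] at heq
    exact heq
  have hmeas : ∀ j : J, MeasurableSet (((Quotient.out j : ↥V) : X) • (U : Set X)) := by
    intro j
    rw [smul_set_eq_preimage]
    exact (hUo.preimage (continuous_mul_left _)).measurableSet
  rw [hcover, measure_iUnion hdisj hmeas, tsum_fintype]
  have hconst : ∀ j : J, ν (((Quotient.out j : ↥V) : X) • (U : Set X)) = ν (U : Set X) := by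
    intro j
    rw [smul_set_eq_preimage]
    exact measure_preimage_mul ν _ _
  rw [Finset.sum_congr rfl fun j _ => hconst j, Finset.sum_const, Finset.card_univ,
    Nat.card_eq_fintype_card, nsmul_eq_mul]


variable {G : Type*} [Group G] [TopologicalSpace G] [IsTopologicalGroup G]
  [MeasurableSpace G] [BorelSpace G]

theorem measure_smul_image {H : Subgroup G}
    [MeasurableSpace (G ⧸ H)] [BorelSpace (G ⧸ H)]
    (μ : Measure (G ⧸ H))
    (hinv : ∀ g : G, Measure.map (fun x : G ⧸ H => g • x) μ = μ)
    (c : G) {A : Set (G ⧸ H)} (hA : MeasurableSet A) :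
    μ ((fun y => c • y) '' A) = μ A := by
  have hms : Measurable (fun y : G ⧸ H => c⁻¹ • y) := (continuous_const_smul c⁻¹).measurable
  have him : (fun y : G ⧸ H => c • y) '' A = (fun y : G ⧸ H => c⁻¹ • y) ⁻¹' A := by
    ext y
    constructor
    · rintro ⟨a, ha, rfl⟩; simpa using ha
    · intro hy; exact ⟨c⁻¹ • y, hy, by simp⟩
  rw [him, ← Measure.map_apply hms hA, hinv c⁻¹]


theorem key (volG : Measure G) [volG.IsMulLeftInvariant]
    (H : Subgroup G) (hHcl : IsClosed (H : Set G))
    (volH : Measure ↥H) [volH.IsMulLeftInvariant]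
    [MeasurableSpace (G ⧸ H)] [BorelSpace (G ⧸ H)]
    (μ : Measure (G ⧸ H))
    (hinv : ∀ g : G, Measure.map (fun x : G ⧸ H => g • x) μ = μ)
    (K₁ K₂ : Subgroup G) (h12 : K₂ ≤ K₁)
    (h1c : IsCompact (K₁ : Set G)) (h1o : IsOpen (K₁ : Set G)) (h2o : IsOpen (K₂ : Set G)) :
    volG (K₁ : Set G) * (volH {h : ↥H | (h : G) ∈ K₂} * μ (QuotientGroup.mk '' (K₂ : Set G)))
      = volG (K₂ : Set G) * (volH {h : ↥H | (h : G) ∈ K₁} * μ (QuotientGroup.mk '' (K₁ : Set G))) := by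
  classical
  haveI : BorelSpace ↥H := Subtype.borelSpace (H : Set G)
  have hsets : ∀ K' : Subgroup G,
      {h : ↥H | (h : G) ∈ K'} = ((K'.subgroupOf H : Subgroup ↥H) : Set ↥H) := by
    intro K'; ext h; simp [Subgroup.mem_subgroupOf]
  have h1cs : CompactSpace ↥K₁ := isCompact_iff_compactSpace.mp h1c
  have hfin1 : Finite (↥K₁ ⧸ K₂.subgroupOf K₁) :=
    Subgroup.quotient_finite_of_isOpen _ (by
      rw [Subgroup.coe_subgroupOf]; exact h2o.preimage continuous_subtype_val)
  have hft1 := Fintype.ofFinite (↥K₁ ⧸ K₂.subgroupOf K₁)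
  set J₁ := ↥K₁ ⧸ K₂.subgroupOf K₁ with hJ₁
  have hKH12 : K₂.subgroupOf H ≤ K₁.subgroupOf H := fun x hx =>
    Subgroup.mem_subgroupOf.2 (h12 (Subgroup.mem_subgroupOf.1 hx))
  have hKH1c : IsCompact ((K₁.subgroupOf H : Subgroup ↥H) : Set ↥H) := by
    rw [Subgroup.coe_subgroupOf]
    exact hHcl.isClosedEmbedding_subtypeVal.isCompact_preimage h1c
  have hKH2o : IsOpen ((K₂.subgroupOf H : Subgroup ↥H) : Set ↥H) := by
    rw [Subgroup.coe_subgroupOf]; exact h2o.preimage continuous_subtype_val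
  have hKH1cs : CompactSpace ↥(K₁.subgroupOf H) := isCompact_iff_compactSpace.mp hKH1c
  have hfin2 : Finite (↥(K₁.subgroupOf H) ⧸ (K₂.subgroupOf H).subgroupOf (K₁.subgroupOf H)) :=
    Subgroup.quotient_finite_of_isOpen _ (by
      rw [Subgroup.coe_subgroupOf]; exact hKH2o.preimage continuous_subtype_val)
  have hft2 := Fintype.ofFinite (↥(K₁.subgroupOf H) ⧸ (K₂.subgroupOf H).subgroupOf (K₁.subgroupOf H))
  set J₂ := ↥(K₁.subgroupOf H) ⧸ (K₂.subgroupOf H).subgroupOf (K₁.subgroupOf H) with hJ₂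
  have f1 : volG (K₁ : Set G) = (Nat.card J₁ : ℝ≥0∞) * volG (K₂ : Set G) :=
    haar_coset_partition volG K₁ K₂ h12 h1c h2o
  have f2 : volH ((K₁.subgroupOf H : Subgroup ↥H) : Set ↥H)
      = (Nat.card J₂ : ℝ≥0∞) * volH ((K₂.subgroupOf H : Subgroup ↥H) : Set ↥H) :=
    haar_coset_partition volH (K₁.subgroupOf H) (K₂.subgroupOf H) hKH12 hKH1c hKH2o
  -- the counting identity
  have f3 : (Nat.card J₁ : ℝ≥0∞) * μ (QuotientGroup.mk '' (K₂ : Set G))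
      = (Nat.card J₂ : ℝ≥0∞) * μ (QuotientGroup.mk '' (K₁ : Set G)) := by
    have hπo : IsOpenMap (QuotientGroup.mk : G → G ⧸ H) := QuotientGroup.isOpenMap_coe
    have hA : IsOpen (QuotientGroup.mk '' (K₂ : Set G)) := hπo _ h2o
    have hB : IsOpen (QuotientGroup.mk '' (K₁ : Set G)) := hπo _ h1o
    set S : J₁ → Set (G ⧸ H) :=
      fun j => QuotientGroup.mk '' (((Quotient.out j : ↥K₁) : G) • (K₂ : Set G)) with hS
    have hSo : ∀ j, IsOpen (S j) := fun j => hπo _ (by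
      rw [smul_set_eq_preimage]; exact h2o.preimage (continuous_mul_left _))
    have hSB : ∀ j, S j ⊆ QuotientGroup.mk '' (K₁ : Set G) := by
      rintro j y ⟨x, hx, rfl⟩
      rcases hx with ⟨u, hu, rfl⟩
      exact ⟨_, mul_mem (Quotient.out j).2 (h12 hu), rfl⟩
    have hSA : ∀ j, μ (S j) = μ (QuotientGroup.mk '' (K₂ : Set G)) := by
      intro j
      have hrw : S j = (fun y => ((Quotient.out j : ↥K₁) : G) • y) ''
          (QuotientGroup.mk '' (K₂ : Set G)) := by
        show QuotientGroup.mk '' (((Quotient.out j : ↥K₁) : G) • (K₂ : Set G)) = _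
        rw [← Set.image_smul, Set.image_image, Set.image_image]
        rfl
      rw [hrw, measure_smul_image μ hinv _ hA.measurableSet]
    have hgx : ∀ x : ↥(K₁.subgroupOf H), (((x : ↥H) : G)) ∈ K₁ :=
      fun x => Subgroup.mem_subgroupOf.1 x.2
    have hpt : ∀ y : G ⧸ H, ∑ j : J₁, (S j).indicator (1 : (G ⧸ H) → ℝ≥0∞) y
        = (QuotientGroup.mk '' (K₁ : Set G)).indicator (fun _ => (Nat.card J₂ : ℝ≥0∞)) y := by
      intro y
      by_cases hy : y ∈ QuotientGroup.mk '' (K₁ : Set G)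
      · rw [Set.indicator_of_mem hy]
        obtain ⟨g, hg, rfl⟩ := hy
        have hsum_card : ∑ j : J₁, (S j).indicator (1 : (G ⧸ H) → ℝ≥0∞) (QuotientGroup.mk g)
            = (((Finset.univ.filter fun j : J₁ =>
                (QuotientGroup.mk g : G ⧸ H) ∈ S j).card : ℕ) : ℝ≥0∞) := by
          rw [Finset.card_filter, Nat.cast_sum]
          refine Finset.sum_congr rfl fun j _ => ?_
          by_cases hj : (QuotientGroup.mk g : G ⧸ H) ∈ S j <;>
            simp [Set.indicator_apply, hj]
        rw [hsum_card]
        congr 1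
        let mkK₁ : ↥(K₁.subgroupOf H) → ↥K₁ :=
          fun x => ⟨g * ((x : ↥H) : G), mul_mem hg (hgx x)⟩
        have hcoe : ∀ x : ↥(K₁.subgroupOf H), ((mkK₁ x : ↥K₁) : G) = g * ((x : ↥H) : G) :=
          fun _ => rfl
        have e_eq : ∀ x x' : ↥(K₁.subgroupOf H),
            (QuotientGroup.mk (mkK₁ x) : J₁) = QuotientGroup.mk (mkK₁ x')
              ↔ (QuotientGroup.mk x : J₂) = QuotientGroup.mk x' := by
          intro x x'
          rw [QuotientGroup.eq, QuotientGroup.eq, Subgroup.mem_subgroupOf,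
            Subgroup.mem_subgroupOf, Subgroup.mem_subgroupOf]
          constructor
          · intro hmem
            have h1 : (((mkK₁ x : ↥K₁) : G))⁻¹ * ((mkK₁ x' : ↥K₁) : G) ∈ K₂ := by
              exact_mod_cast hmem
            rw [hcoe, hcoe] at h1
            have h2 : (((x : ↥H) : G))⁻¹ * ((x' : ↥H) : G) ∈ K₂ := by
              rwa [show ((g * ((x : ↥H) : G))⁻¹ * (g * ((x' : ↥H) : G)) : G)
                = (((x : ↥H) : G))⁻¹ * ((x' : ↥H) : G) by group] at h1
            exact_mod_cast h2
          · intro hmem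
            have h2 : (((x : ↥H) : G))⁻¹ * ((x' : ↥H) : G) ∈ K₂ := by exact_mod_cast hmem
            have h1 : (((mkK₁ x : ↥K₁) : G))⁻¹ * ((mkK₁ x' : ↥K₁) : G) ∈ K₂ := by
              rw [hcoe, hcoe]
              rwa [show ((g * ((x : ↥H) : G))⁻¹ * (g * ((x' : ↥H) : G)) : G)
                = (((x : ↥H) : G))⁻¹ * ((x' : ↥H) : G) by group]
            exact_mod_cast h1
        have hbij : (Finset.univ : Finset J₂).card
            = (Finset.univ.filter fun j : J₁ => (QuotientGroup.mk g : G ⧸ H) ∈ S j).card := by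
          refine Finset.card_nbij
            (fun j₂ : J₂ => (QuotientGroup.mk (mkK₁ (Quotient.out j₂)) : J₁)) ?_ ?_ ?_
          · intro j₂ _
            rw [Finset.mem_coe, Finset.mem_filter]
            refine ⟨Finset.mem_univ _, ?_⟩
            have hout : (QuotientGroup.mk (Quotient.out
                ((QuotientGroup.mk (mkK₁ (Quotient.out j₂)) : J₁))) : J₁)
                = QuotientGroup.mk (mkK₁ (Quotient.out j₂)) := QuotientGroup.out_eq' _
            rw [QuotientGroup.eq, Subgroup.mem_subgroupOf] at hout
            refine ⟨g * (((Quotient.out j₂ : ↥(K₁.subgroupOf H)) : ↥H) : G), ?_, ?_⟩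
            · rw [Set.mem_smul_set_iff_inv_smul_mem, smul_eq_mul]
              have h3 := hout
              push_cast at h3
              simp only [SetLike.mem_coe]
              exact h3
            · rw [QuotientGroup.eq]
              have h4 : ((((Quotient.out j₂ : ↥(K₁.subgroupOf H)) : ↥H) : G))⁻¹ ∈ H :=
                inv_mem ((Quotient.out j₂ : ↥(K₁.subgroupOf H)) : ↥H).2
              simpa [mul_inv_rev, mul_assoc] using h4
          · intro j₂ _ j₂' _ hEq
            have := (e_eq _ _).1 hEq
            rwa [QuotientGroup.out_eq', QuotientGroup.out_eq'] at this
          · intro j₁ hj₁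
            simp only [Finset.coe_filter, Set.mem_setOf_eq, Finset.mem_univ, true_and] at hj₁
            obtain ⟨a, ha, hmk⟩ := hj₁
            rw [Set.mem_smul_set_iff_inv_smul_mem, smul_eq_mul] at ha
            have haK₁ : a ∈ K₁ := by
              have h5 := mul_mem (Quotient.out j₁).2 (h12 ha)
              simpa [mul_assoc] using h5
            have hhH : g⁻¹ * a ∈ H := by
              rw [QuotientGroup.eq] at hmk
              simpa [mul_inv_rev] using inv_mem hmk
            have hhK₁ : g⁻¹ * a ∈ K₁ := mul_mem (inv_mem hg) haK₁
            refine ⟨(QuotientGroup.mk (⟨⟨g⁻¹ * a, hhH⟩,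
              Subgroup.mem_subgroupOf.2 hhK₁⟩ : ↥(K₁.subgroupOf H)) : J₂),
              Finset.mem_coe.2 (Finset.mem_univ _), ?_⟩
            show (QuotientGroup.mk (mkK₁ (Quotient.out (QuotientGroup.mk
              (⟨⟨g⁻¹ * a, hhH⟩, Subgroup.mem_subgroupOf.2 hhK₁⟩ : ↥(K₁.subgroupOf H)) : J₂))) : J₁)
              = j₁
            rw [(e_eq _ _).2 (QuotientGroup.out_eq' _)]
            rw [← QuotientGroup.out_eq' j₁, QuotientGroup.eq, Subgroup.mem_subgroupOf]
            have h7 : ((mkK₁ (⟨⟨g⁻¹ * a, hhH⟩, Subgroup.mem_subgroupOf.2 hhK₁⟩ :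
                ↥(K₁.subgroupOf H)) : ↥K₁) : G)⁻¹ * ((Quotient.out j₁ : ↥K₁) : G) ∈ K₂ := by
              rw [hcoe]
              show ((g * (g⁻¹ * a))⁻¹ * _ : G) ∈ K₂
              rw [show ((g * (g⁻¹ * a))⁻¹ : G) = a⁻¹ by group]
              have h6 := inv_mem ha
              simpa [mul_inv_rev] using h6
            exact_mod_cast h7
        rw [Nat.card_eq_fintype_card, ← Finset.card_univ]
        exact_mod_cast hbij.symm
      · rw [Set.indicator_of_notMem hy]
        refine Finset.sum_eq_zero fun j _ => ?_
        exact Set.indicator_of_notMem (fun hmem => hy (hSB j hmem)) _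
    calc (Nat.card J₁ : ℝ≥0∞) * μ (QuotientGroup.mk '' (K₂ : Set G))
        = ∑ j : J₁, μ (S j) := by
          rw [Finset.sum_congr rfl fun j _ => hSA j, Finset.sum_const, Finset.card_univ,
            Nat.card_eq_fintype_card, nsmul_eq_mul]
      _ = ∑ j : J₁, ∫⁻ y, (S j).indicator 1 y ∂μ :=
          Finset.sum_congr rfl fun j _ => (lintegral_indicator_one (hSo j).measurableSet).symm
      _ = ∫⁻ y, ∑ j : J₁, (S j).indicator 1 y ∂μ :=
          (lintegral_finset_sum _ fun j _ => measurable_one.indicator (hSo j).measurableSet).symm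
      _ = ∫⁻ y, (QuotientGroup.mk '' (K₁ : Set G)).indicator
            (fun _ => (Nat.card J₂ : ℝ≥0∞)) y ∂μ := lintegral_congr hpt
      _ = (Nat.card J₂ : ℝ≥0∞) * μ (QuotientGroup.mk '' (K₁ : Set G)) := by
          rw [lintegral_indicator hB.measurableSet, setLIntegral_const]

  rw [hsets K₁, hsets K₂]
  calc volG (K₁ : Set G) * (volH ((K₂.subgroupOf H : Subgroup ↥H) : Set ↥H)
        * μ (QuotientGroup.mk '' (K₂ : Set G)))
      = volG (K₂ : Set G) * volH ((K₂.subgroupOf H : Subgroup ↥H) : Set ↥H)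
        * ((Nat.card J₁ : ℝ≥0∞) * μ (QuotientGroup.mk '' (K₂ : Set G))) := by rw [f1]; ring
    _ = volG (K₂ : Set G) * volH ((K₂.subgroupOf H : Subgroup ↥H) : Set ↥H)
        * ((Nat.card J₂ : ℝ≥0∞) * μ (QuotientGroup.mk '' (K₁ : Set G))) := by rw [f3]
    _ = volG (K₂ : Set G) * (volH ((K₁.subgroupOf H : Subgroup ↥H) : Set ↥H)
        * μ (QuotientGroup.mk '' (K₁ : Set G))) := by rw [f2]; ring

end SerreAux

open SerreAux

/-- **Serre's covolume formula.**  Let `G` be a unimodular totally disconnected locally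
compact group, `K` a compact open subgroup, `H` a closed unimodular subgroup, and `μ` a
`G`-invariant Radon measure on `G/H`.  Normalize `vol_H` so that `vol_H (K ∩ H) = 1` and
`μ` so that `μ (K · x₀) = 1`, where `x₀` is the base point of `G/H` (and fix a Haar measure
`vol_G` with `vol_G K = 1`).  Then for any set `Ω ⊆ G` of representatives of the double
cosets `K\G/H`, the total mass of `μ` is `∑_{t ∈ Ω} 1 / vol_H (t⁻¹Kt ∩ H)`. -/
theorem serre_covolume_formula
    {G : Type*} [Group G] [TopologicalSpace G] [IsTopologicalGroup G]
    [LocallyCompactSpace G] [T2Space G] [TotallyDisconnectedSpace G]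
    [MeasurableSpace G] [BorelSpace G]
    (volG : Measure G) [volG.IsHaarMeasure] [volG.IsMulRightInvariant]
    (K : Subgroup G) (hKc : IsCompact (K : Set G)) (hKo : IsOpen (K : Set G))
    (hvolGK : volG (K : Set G) = 1)
    (H : Subgroup G) (hHcl : IsClosed (H : Set G))
    (volH : Measure ↥H) [volH.IsHaarMeasure] [volH.IsMulRightInvariant]
    (hvolHK : volH {h : ↥H | (h : G) ∈ K} = 1)
    [MeasurableSpace (G ⧸ H)] [BorelSpace (G ⧸ H)]
    (μ : Measure (G ⧸ H)) [μ.Regular]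
    (hinv : ∀ g : G, Measure.map (fun x : G ⧸ H => g • x) μ = μ)
    (hμK : μ ((fun g : G => (g : G ⧸ H)) '' (K : Set G)) = 1)
    (Ω : Set G)
    (hcover : ∀ g : G, ∃ t ∈ Ω, ∃ k ∈ K, ∃ h ∈ H, g = k * t * h)
    (hunique : ∀ t₁ ∈ Ω, ∀ t₂ ∈ Ω, (∃ k ∈ K, ∃ h ∈ H, t₂ = k * t₁ * h) → t₁ = t₂) :
    μ Set.univ =
      ∑' t : Ω, (volH {h : ↥H | (h : G) ∈ (fun x => (t : G)⁻¹ * x * (t : G)) '' (K : Set G)})⁻¹ := by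
  classical
  have hπo : IsOpenMap (QuotientGroup.mk : G → G ⧸ H) := QuotientGroup.isOpenMap_coe
  have hμK' : μ (QuotientGroup.mk '' (K : Set G)) = 1 := hμK
  -- main evaluation of the measure of a single orbit
  have main : ∀ t : G, volH {h : ↥H | (h : G) ∈ (fun x => t⁻¹ * x * t) '' (K : Set G)}
      * μ (QuotientGroup.mk '' ((fun k => k * t) '' (K : Set G))) = 1 := by
    intro t
    set Kt : Subgroup G := K.map (MulAut.conj t⁻¹).toMonoidHom with hKt
    have hKtset : (Kt : Set G) = (fun x => t⁻¹ * x * t) '' (K : Set G) := by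
      rw [hKt, Subgroup.coe_map]
      exact Set.image_congr' fun x => by simp [MulAut.conj_apply]
    have hKtc : IsCompact (Kt : Set G) := by
      rw [hKtset]
      exact hKc.image (by fun_prop)
    have hKto : IsOpen (Kt : Set G) := by
      rw [hKtset]
      have := ((Homeomorph.mulLeft t⁻¹).trans (Homeomorph.mulRight t)).isOpenMap
        (K : Set G) hKo
      exact this
    have hvolGKt : volG (Kt : Set G) = 1 := by
      rw [hKtset]
      have him : (fun x => t⁻¹ * x * t) '' (K : Set G)
          = (fun x => x * t) '' ((fun x => t⁻¹ * x) '' (K : Set G)) := by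
        rw [Set.image_image]
      rw [him]
      have h1 : (fun x => x * t) '' ((fun x => t⁻¹ * x) '' (K : Set G))
          = (fun x => x * t⁻¹) ⁻¹' ((fun x => t⁻¹ * x) '' (K : Set G)) := by
        ext x
        constructor
        · rintro ⟨u, hu, rfl⟩
          simpa using hu
        · intro hx
          exact ⟨x * t⁻¹, hx, by group⟩
      have h2 : (fun x => t⁻¹ * x) '' (K : Set G) = (fun x => t * x) ⁻¹' (K : Set G) := by
        ext x
        constructor
        · rintro ⟨u, hu, rfl⟩
          simpa using hu
        · intro hx
          exact ⟨t * x, hx, by group⟩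
      rw [h1, measure_preimage_mul_right volG t⁻¹, h2, measure_preimage_mul volG t, hvolGK]
    -- compare both K and Kt with their intersection
    have h2o : IsOpen ((K ⊓ Kt : Subgroup G) : Set G) := by
      rw [Subgroup.coe_inf]; exact hKo.inter hKto
    have h2c : IsCompact ((K ⊓ Kt : Subgroup G) : Set G) := by
      rw [Subgroup.coe_inf]; exact hKc.inter_right hKtc.isClosed
    have keyA := key volG H hHcl volH μ hinv K (K ⊓ Kt) inf_le_left hKc hKo h2o
    have keyB := key volG H hHcl volH μ hinv Kt (K ⊓ Kt) inf_le_right hKtc hKto h2o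
    have ha0 : volG ((K ⊓ Kt : Subgroup G) : Set G) ≠ 0 :=
      (h2o.measure_pos volG ⟨1, one_mem _⟩).ne'
    have hatop : volG ((K ⊓ Kt : Subgroup G) : Set G) ≠ ∞ := h2c.measure_lt_top.ne
    have keyA' : volH {h : ↥H | (h : G) ∈ (K ⊓ Kt : Subgroup G)}
        * μ (QuotientGroup.mk '' ((K ⊓ Kt : Subgroup G) : Set G))
        = volG ((K ⊓ Kt : Subgroup G) : Set G) := by
      rw [hvolGK, hvolHK, hμK'] at keyA
      simpa using keyA
    have keyB' : volH {h : ↥H | (h : G) ∈ (K ⊓ Kt : Subgroup G)}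
        * μ (QuotientGroup.mk '' ((K ⊓ Kt : Subgroup G) : Set G))
        = volG ((K ⊓ Kt : Subgroup G) : Set G)
          * (volH {h : ↥H | (h : G) ∈ Kt} * μ (QuotientGroup.mk '' (Kt : Set G))) := by
      rw [hvolGKt] at keyB
      simpa using keyB
    have hY : volH {h : ↥H | (h : G) ∈ Kt} * μ (QuotientGroup.mk '' (Kt : Set G)) = 1 :=
      ((ENNReal.mul_right_inj ha0 hatop).1 (by rw [mul_one, ← keyB', keyA'])).symm
    -- translate the orbit
    have horb : μ (QuotientGroup.mk '' ((fun k => k * t) '' (K : Set G)))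
        = μ (QuotientGroup.mk '' (Kt : Set G)) := by
      have him : (fun y : G ⧸ H => t • y) '' (QuotientGroup.mk '' (Kt : Set G))
          = QuotientGroup.mk '' ((fun k => k * t) '' (K : Set G)) := by
        rw [hKtset, Set.image_image, Set.image_image, Set.image_image]
        refine Set.image_congr' fun x => ?_
        show t • (QuotientGroup.mk (t⁻¹ * x * t) : G ⧸ H) = QuotientGroup.mk (x * t)
        rw [MulAction.Quotient.smul_mk]
        refine congrArg _ ?_
        show t * (t⁻¹ * x * t) = x * t
        group
      rw [← him, measure_smul_image μ hinv t (hπo _ hKto).measurableSet]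
    rw [horb, ← hKtset]
    exact hY
  -- the orbits, indexed by Ω
  set O : Ω → Set (G ⧸ H) :=
    fun t => QuotientGroup.mk '' ((fun k => k * (t : G)) '' (K : Set G)) with hO
  have hOopen : ∀ t : Ω, IsOpen (O t) :=
    fun t => hπo _ ((Homeomorph.mulRight (t : G)).isOpenMap _ hKo)
  have hOcover : ⋃ t : Ω, O t = Set.univ := by
    refine Set.eq_univ_of_forall fun y => ?_
    obtain ⟨g, rfl⟩ := QuotientGroup.mk_surjective y
    obtain ⟨t, htΩ, k, hk, h, hh, rfl⟩ := hcover g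
    refine Set.mem_iUnion.2 ⟨⟨t, htΩ⟩, ⟨k * t, ⟨k, hk, rfl⟩, ?_⟩⟩
    exact (QuotientGroup.mk_mul_of_mem (k * t) hh).symm
  have hOdisj : Pairwise (Function.onFun Disjoint O) := by
    intro t₁ t₂ hne
    rw [Function.onFun, Set.disjoint_left]
    rintro y ⟨x₁, ⟨k₁, hk₁, rfl⟩, hmk₁⟩ ⟨x₂, ⟨k₂, hk₂, rfl⟩, hmk₂⟩
    apply hne
    have hH : (k₁ * (t₁ : G))⁻¹ * (k₂ * (t₂ : G)) ∈ H := by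
      rw [← QuotientGroup.eq, hmk₁, hmk₂]
    apply Subtype.ext
    refine hunique _ t₁.2 _ t₂.2 ⟨k₂⁻¹ * k₁, mul_mem (inv_mem hk₂) hk₁,
      (k₁ * (t₁ : G))⁻¹ * (k₂ * (t₂ : G)), hH, ?_⟩
    group
  have htotal : μ Set.univ = ∑' t : Ω, μ (O t) := by
    apply le_antisymm
    · refine le_of_forall_lt fun r hr => ?_
      obtain ⟨C, -, hCc, hrC⟩ := MeasureTheory.Measure.Regular.innerRegular isOpen_univ r hr
      have hsub : C ⊆ ⋃ t : Ω, O t := by rw [hOcover]; exact Set.subset_univ C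
      obtain ⟨F, hF⟩ := hCc.elim_finite_subcover O hOopen hsub
      calc r < μ C := hrC
        _ ≤ μ (⋃ t ∈ F, O t) := measure_mono hF
        _ ≤ ∑ t ∈ F, μ (O t) := measure_biUnion_finset_le F O
        _ ≤ ∑' t : Ω, μ (O t) := ENNReal.sum_le_tsum F
    · rw [ENNReal.tsum_eq_iSup_sum]
      refine iSup_le fun F => ?_
      rw [← measure_biUnion_finset (fun i _ j _ hij => hOdisj hij)
        (fun t _ => (hOopen t).measurableSet)]
      exact measure_mono (Set.subset_univ _)
  rw [htotal]
  refine tsum_congr fun t => ?_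
  exact ENNReal.eq_inv_of_mul_eq_one_left (by rw [mul_comm]; exact main (t : G))
end

section
/- Let G be a compactly generated locally compact group and N a discrete cocompact normal subgroup of G. Then the centralizer C_G(N) is an open normal subgroup of G, and the subgroup N·C_G(N) is open and of finite index in G. If in addition G is totally disconnected, then G has a compact open normal subgroup intersecting N trivially. -/
open Set Pointwise Filter

section AuxCOD

variable {G : Type*} [Group G] [TopologicalSpace G] [IsTopologicalGroup G]





/-- A discrete subgroup of a Hausdorff topological group is closed. -/
theorem auxCOD_isClosed_of_discrete [T2Space G] (N : Subgroup G)
    (hNdisc : DiscreteTopology ↥N) : IsClosed (N : Set G) := by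
  haveI : DiscreteTopology ((N : Set G) : Type _) := hNdisc
  obtain ⟨V, hV, hVN⟩ := nhds_inter_eq_singleton_of_mem_discrete (isDiscrete_iff_discreteTopology.mpr this) (N.one_mem : (1:G) ∈ (N : Set G))
  -- find open symmetric W with W⁻¹ * W ⊆ V
  have hcont : Continuous (fun p : G × G => p.1⁻¹ * p.2) := by continuity
  have hpre : (fun p : G × G => p.1⁻¹ * p.2) ⁻¹' V ∈ nhds ((1:G), (1:G)) := by
    apply hcont.continuousAt.preimage_mem_nhds
    simpa using hV
  rw [mem_nhds_prod_iff] at hpre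
  obtain ⟨u, hu, v, hv, huv⟩ := hpre
  obtain ⟨u', hu'u, hu'open, h1u'⟩ := mem_nhds_iff.mp hu
  obtain ⟨v', hv'v, hv'open, h1v'⟩ := mem_nhds_iff.mp hv
  set W := u' ∩ v' with hW
  have hWopen : IsOpen W := hu'open.inter hv'open
  have h1W : (1:G) ∈ W := ⟨h1u', h1v'⟩
  have hWV : ∀ a ∈ W, ∀ b ∈ W, a⁻¹ * b ∈ V := by
    intro a ha b hb
    exact huv (Set.mk_mem_prod (hu'u ha.1) (hv'v hb.2))
  rw [← closure_subset_iff_isClosed]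
  intro x hx
  have hx1 : ∀ O : Set G, IsOpen O → x ∈ O → (O ∩ (N : Set G)).Nonempty := by
    intro O hO hxO
    exact mem_closure_iff.mp hx O hO hxO
  have hxW : x ∈ x • W := ⟨1, h1W, mul_one x⟩
  obtain ⟨n, hnO, hnN⟩ := hx1 (x • W) (hWopen.smul x) hxW
  by_contra hxN
  have hne : x ≠ n := fun h => hxN (h ▸ hnN)
  obtain ⟨n', hn'O, hn'N⟩ := hx1 ((x • W) ∩ {n}ᶜ)
    ((hWopen.smul x).inter isOpen_compl_singleton) ⟨hxW, hne⟩
  obtain ⟨w, hw, hweq⟩ := hnO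
  obtain ⟨w', hw', hw'eq⟩ := hn'O.1
  have hmem : n⁻¹ * n' ∈ V := by
    have : n⁻¹ * n' = w⁻¹ * w' := by
      simp only [← hweq, ← hw'eq, smul_eq_mul]; group
    rw [this]; exact hWV w hw w' hw'
  have hmemN : n⁻¹ * n' ∈ (N : Set G) := N.mul_mem (N.inv_mem hnN) hn'N
  have : n⁻¹ * n' = 1 := by
    have := hVN ▸ Set.mem_inter hmem hmemN
    simpa using this
  exact hn'O.2 (inv_mul_eq_one.mp this).symm





/-- If `N ≤ H`, `G/N` is compact and `H` is open, then `G/H` is finite. -/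
theorem auxCOD_finite_quotient (N H : Subgroup G) [N.Normal]
    (hNcc : IsCompact (Set.univ : Set (G ⧸ N))) (hNH : N ≤ H) (hH : IsOpen (H : Set G)) :
    Finite (G ⧸ H) := by
  haveI : CompactSpace (G ⧸ N) := isCompact_univ_iff.mp hNcc
  haveI : DiscreteTopology (G ⧸ H) := QuotientGroup.discreteTopology hH
  set f : G ⧸ N → G ⧸ H := Quotient.map' id
    (fun a b h => QuotientGroup.leftRel_apply.mpr
      (hNH (QuotientGroup.leftRel_apply.mp h))) with hf
  have hcomp : f ∘ (QuotientGroup.mk : G → G ⧸ N) = (QuotientGroup.mk : G → G ⧸ H) := rfl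
  have hcont : Continuous f := by
    rw [QuotientGroup.isOpenQuotientMap_mk.isQuotientMap.continuous_iff, hcomp]
    exact continuous_quot_mk
  have hsurj : Function.Surjective f := by
    intro q
    obtain ⟨g, rfl⟩ := QuotientGroup.mk_surjective q
    exact ⟨QuotientGroup.mk g, rfl⟩
  haveI : CompactSpace (G ⧸ H) := by
    constructor
    have := (isCompact_univ (X := G ⧸ N)).image hcont
    rwa [Set.image_univ, hsurj.range_eq] at this
  exact finite_of_compact_of_discrete

/-- Compact "section" for a cocompact subgroup. -/
theorem auxCOD_compact_dec [LocallyCompactSpace G] (N : Subgroup G) [N.Normal]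
    (hNcc : IsCompact (Set.univ : Set (G ⧸ N))) :
    ∃ K : Set G, IsCompact K ∧ (1:G) ∈ K ∧ ∀ g : G, ∃ n ∈ N, ∃ k ∈ K, g = n * k := by
  have hCnhds : ∀ q : G ⧸ N, ∃ C : Set G, IsCompact C ∧ (q.out ∈ interior C) := by
    intro q
    obtain ⟨C, hC, hCn⟩ := exists_compact_mem_nhds (Quotient.out q)
    exact ⟨C, hC, mem_interior_iff_mem_nhds.mpr hCn⟩
  choose C hCcomp hCmem using hCnhds
  have hcover : (Set.univ : Set (G ⧸ N)) ⊆
      ⋃ q : G ⧸ N, (QuotientGroup.mk '' interior (C q)) := by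
    intro p _
    exact Set.mem_iUnion.mpr ⟨p, ⟨p.out, hCmem p, QuotientGroup.out_eq' p⟩⟩
  obtain ⟨t, ht⟩ := hNcc.elim_finite_subcover _
    (fun q => QuotientGroup.isOpenMap_coe _ isOpen_interior) hcover
  refine ⟨(⋃ q ∈ t, C q) ∪ {1}, ?_, Or.inr rfl, ?_⟩
  · exact (t.finite_toSet.isCompact_biUnion (fun q _ => hCcomp q)).union isCompact_singleton
  · intro g
    obtain ⟨q, hqt, x, hx, hxg⟩ := by
      have := ht (Set.mem_univ (QuotientGroup.mk g : G ⧸ N))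
      simpa using this
    have hm : x⁻¹ * g ∈ N := QuotientGroup.eq.mp hxg
    refine ⟨x * (x⁻¹ * g) * x⁻¹, Subgroup.Normal.conj_mem ‹N.Normal› _ hm x, x,
      Or.inl (Set.mem_biUnion hqt (interior_subset hx)), by group⟩

theorem auxCOD_fin_gen [T2Space G] [LocallyCompactSpace G]
    (hcg : ∃ S : Set G, IsCompact S ∧ Subgroup.closure S = ⊤)
    (N : Subgroup G) [N.Normal] (hNdisc : DiscreteTopology ↥N)
    (hNcc : IsCompact (Set.univ : Set (G ⧸ N))) :
    ∃ T : Set G, T.Finite ∧ T ⊆ (N : Set G) ∧ N ≤ Subgroup.closure T := by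
  obtain ⟨S, hScomp, hStop⟩ := hcg
  obtain ⟨K, hKcomp, hK1, hdec⟩ := auxCOD_compact_dec N hNcc
  set S₁ : Set G := (S ∪ S⁻¹) ∪ {1} with hS₁
  have hS₁comp : IsCompact S₁ := (hScomp.union hScomp.inv).union isCompact_singleton
  set D : Set G := (fun p : G × G × G => p.1 * p.2.1 * p.2.2⁻¹) '' (K ×ˢ S₁ ×ˢ K) with hD
  have hDcomp : IsCompact D := by
    apply IsCompact.image (hKcomp.prod (hS₁comp.prod hKcomp))
    exact (continuous_fst.mul (continuous_snd.fst)).mul (continuous_snd.snd.inv)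
  have hDmem : ∀ k1 ∈ K, ∀ s ∈ S₁, ∀ k2 ∈ K, k1 * s * k2⁻¹ ∈ D := by
    intro k1 h1 s hs k2 h2
    exact ⟨(k1, s, k2), ⟨h1, hs, h2⟩, rfl⟩
  set T : Set G := (N : Set G) ∩ D with hT
  have hTN : T ⊆ (N : Set G) := Set.inter_subset_left
  have hTfin : T.Finite := by
    have hTcomp : IsCompact T := hDcomp.inter_left (auxCOD_isClosed_of_discrete N hNdisc)
    haveI hd : DiscreteTopology ((N : Set G) : Type _) := hNdisc
    haveI : DiscreteTopology (T : Type _) := DiscreteTopology.of_subset hd Set.inter_subset_left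
    exact hTcomp.finite (isDiscrete_iff_discreteTopology.mpr ‹_›)
  refine ⟨T, hTfin, hTN, ?_⟩
  have main : ∀ l : List G, (∀ x ∈ l, x ∈ S ∪ S⁻¹) → ∀ n k : G, n ∈ N → k ∈ K →
      l.prod = n * k → n ∈ Subgroup.closure T := by
    intro l
    induction l using List.reverseRecOn with
    | nil =>
      intro _ n k hn hk h
      simp only [List.prod_nil] at h
      have hnk : n = 1 * 1 * k⁻¹ := by
        rw [one_mul, one_mul]
        exact eq_inv_of_mul_eq_one_left h.symm
      exact Subgroup.subset_closure ⟨hn, hnk ▸ hDmem 1 hK1 1 (Or.inr rfl) k hk⟩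
    | append_singleton l s ih =>
      intro hmem n k hn hk h
      rw [List.prod_append, List.prod_singleton] at h
      obtain ⟨n', hn', k', hk', hgdec⟩ := hdec l.prod
      have hn'cl := ih (fun x hx => hmem x (by simp [hx])) n' k' hn' hk' hgdec
      rw [hgdec] at h
      have heq : n'⁻¹ * n = k' * s * k⁻¹ := by
        apply mul_left_cancel (a := n')
        apply mul_right_cancel (b := k)
        calc n' * (n'⁻¹ * n) * k = n * k := by group
          _ = n' * k' * s := h.symm
          _ = n' * (k' * s * k⁻¹) * k := by group
      have hsS₁ : s ∈ S₁ := Or.inl (hmem s (by simp))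
      have ht : n'⁻¹ * n ∈ T :=
        ⟨N.mul_mem (N.inv_mem hn') hn, heq ▸ hDmem k' hk' s hsS₁ k hk⟩
      have : n = n' * (n'⁻¹ * n) := by group
      rw [this]
      exact Subgroup.mul_mem _ hn'cl (Subgroup.subset_closure ht)
  intro n hn
  have hmono : n ∈ Submonoid.closure (S ∪ S⁻¹) := by
    have : n ∈ (Subgroup.closure S).toSubmonoid := by
      rw [hStop]; trivial
    rwa [Subgroup.closure_toSubmonoid] at this
  obtain ⟨l, hl, hlprod⟩ := Submonoid.exists_list_of_mem_closure hmono
  exact main l hl n 1 hn hK1 (by rw [mul_one]; exact hlprod)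




/-- If `N` is a normal discrete subgroup generated by a finite set `T`, then its
centralizer is open. -/
theorem auxCOD_centralizer_open (N : Subgroup G) [N.Normal]
    (hNdisc : DiscreteTopology ↥N) {T : Set G} (hTfin : T.Finite)
    (hTN : T ⊆ (N : Set G)) (hNT : N ≤ Subgroup.closure T) :
    IsOpen ((Subgroup.centralizer (N : Set G) : Subgroup G) : Set G) := by
  haveI hd : DiscreteTopology ((N : Set G) : Type _) := hNdisc
  have key : ∀ t : G, ∃ O : Set G, IsOpen O ∧ (t ∈ T → t ∈ O ∧ O ∩ (N : Set G) ⊆ {t}) := by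
    intro t
    by_cases ht : t ∈ T
    · obtain ⟨U, hU, hUN⟩ := nhds_inter_eq_singleton_of_mem_discrete (isDiscrete_iff_discreteTopology.mpr hd) (hTN ht)
      obtain ⟨O, hOU, hOopen, htO⟩ := mem_nhds_iff.mp hU
      exact ⟨O, hOopen, fun _ => ⟨htO, fun x hx => hUN ▸ Set.mem_inter (hOU hx.1) hx.2⟩⟩
    · exact ⟨Set.univ, isOpen_univ, fun h => absurd h ht⟩
  choose O hOopen hOprop using key
  have hset : ((Subgroup.centralizer (N : Set G) : Subgroup G) : Set G) =
      ⋂ t ∈ T, (fun g : G => g * t * g⁻¹) ⁻¹' (O t) := by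
    ext g
    simp only [SetLike.mem_coe, Set.mem_iInter, Set.mem_preimage]
    constructor
    · intro hg t ht
      have := Subgroup.mem_centralizer_iff.mp hg t (hTN ht)
      have hgt : g * t * g⁻¹ = t := by
        rw [← this]; group
      rw [hgt]
      exact ((hOprop t) ht).1
    · intro hall
      have hTle : T ⊆ (Subgroup.centralizer {g} : Set G) := by
        intro t ht
        have h1 : g * t * g⁻¹ ∈ O t := hall t ht
        have h2 : g * t * g⁻¹ ∈ (N : Set G) :=
          Subgroup.Normal.conj_mem ‹N.Normal› t (hTN ht) g
        have h3 : g * t * g⁻¹ = t := ((hOprop t) ht).2 ⟨h1, h2⟩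
        have : g * t = t * g := by
          calc g * t = (g * t * g⁻¹) * g := by group
            _ = t * g := by rw [h3]
        exact Subgroup.mem_centralizer_iff.mpr (fun h hh => by
          rw [Set.mem_singleton_iff] at hh; rw [hh]; exact this)
      have hNle : N ≤ Subgroup.centralizer {g} :=
        le_trans hNT ((Subgroup.closure_le _).mpr hTle)
      exact Subgroup.mem_centralizer_iff.mpr (fun m hm =>
        (Subgroup.mem_centralizer_iff.mp (hNle hm) g rfl).symm)
  rw [hset]
  exact hTfin.isOpen_biInter (fun t _ =>
    (((continuous_id.mul continuous_const).mul continuous_inv)).isOpen_preimage _ (hOopen t))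




/-- For an open compact set `W`, there is a neighborhood `T` of `1` with `W * T ⊆ W`. -/
theorem auxCOD_mul_closure_nhd {W : Set G} (hWcomp : IsCompact W) (hWopen : IsOpen W) :
    ∃ T ∈ nhds (1 : G), W * T ⊆ W := by
  apply hWcomp.induction_on (p := fun S ↦ ∃ T ∈ nhds (1 : G), S * T ⊆ W)
    ⟨Set.univ, by simp only [univ_mem, Set.empty_mul, Set.empty_subset, and_self]⟩
    (fun _ _ huv ⟨T, hT, mem⟩ ↦ ⟨T, hT, (Set.mul_subset_mul_right huv).trans mem⟩)
    (fun U V ⟨T₁, hT₁, mem1⟩ ⟨T₂, hT₂, mem2⟩ ↦ ⟨T₁ ∩ T₂, inter_mem hT₁ hT₂, by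
      rw [Set.union_mul]
      exact Set.union_subset ((Set.mul_subset_mul_left Set.inter_subset_left).trans mem1)
        ((Set.mul_subset_mul_left Set.inter_subset_right).trans mem2)⟩)
  intro x memW
  have : (x, 1) ∈ (fun p : G × G ↦ p.1 * p.2) ⁻¹' W := by simp [memW]
  rcases isOpen_prod_iff.mp (continuous_mul.isOpen_preimage W hWopen) x 1 this with
    ⟨U, V, Uopen, Vopen, xmemU, onememV, prodsub⟩
  have h6 : U * V ⊆ W :=
    Set.mul_subset_iff.mpr (fun _ hx _ hy ↦ prodsub (Set.mk_mem_prod hx hy))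
  exact ⟨U ∩ W, ⟨U, Uopen.mem_nhds xmemU, W, fun _ a ↦ a, rfl⟩,
    V, Vopen.mem_nhds onememV, fun _ a ↦ h6 ((Set.mul_subset_mul_right Set.inter_subset_left) a)⟩

/-- Van Dantzig: in a locally compact totally disconnected Hausdorff group, every
neighborhood of `1` contains a compact open subgroup. -/
theorem auxCOD_vanDantzig [LocallyCompactSpace G] [T2Space G] [TotallyDisconnectedSpace G]
    {Ω : Set G} (hΩ : IsOpen Ω) (h1Ω : (1:G) ∈ Ω) :
    ∃ U : Subgroup G, IsOpen (U : Set G) ∧ IsCompact (U : Set G) ∧ (U : Set G) ⊆ Ω := by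
  obtain ⟨Kc, hKc, h1K, hKΩ⟩ := exists_compact_subset hΩ h1Ω
  obtain ⟨W, hWclopen, h1W, hWsub⟩ :=
    (TopologicalSpace.IsTopologicalBasis.mem_nhds_iff loc_compact_Haus_tot_disc_of_zero_dim).mp
      (isOpen_interior.mem_nhds h1K)
  have hWcomp : IsCompact W := hKc.of_isClosed_subset hWclopen.1 (hWsub.trans interior_subset)
  have hWopen : IsOpen W := hWclopen.2
  obtain ⟨T, hT, hWT⟩ := auxCOD_mul_closure_nhd hWcomp hWopen
  obtain ⟨V, hVT, hVopen, h1V⟩ := mem_nhds_iff.mp hT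
  set V' : Set G := V ∩ V⁻¹ with hV'
  have hV'open : IsOpen V' := hVopen.inter hVopen.inv
  have h1V' : (1:G) ∈ V' := ⟨h1V, by simpa using h1V⟩
  have hV'symm : V'⁻¹ = V' := by
    ext x; simp [hV', Set.mem_inv, and_comm]
  have hV'T : V' ⊆ T := fun x hx => hVT hx.1
  set U : Subgroup G := Subgroup.closure V' with hU
  have hUopen : IsOpen (U : Set G) :=
    U.isOpen_of_mem_nhds (Filter.mem_of_superset (hV'open.mem_nhds h1V') Subgroup.subset_closure)
  have hlist : ∀ l : List G, (∀ x ∈ l, x ∈ V') → l.prod ∈ W := by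
    intro l
    induction l using List.reverseRecOn with
    | nil => intro _; simpa using h1W
    | append_singleton l v ih =>
      intro hmem
      rw [List.prod_append, List.prod_singleton]
      exact hWT (Set.mul_mem_mul (ih (fun x hx => hmem x (by simp [hx])))
        (hV'T (hmem v (by simp))))
  have hUW : (U : Set G) ⊆ W := by
    intro x hx
    have hx' : x ∈ (Subgroup.closure V').toSubmonoid := hx
    rw [Subgroup.closure_toSubmonoid, hV'symm, Set.union_self] at hx'
    obtain ⟨l, hl, rfl⟩ := Submonoid.exists_list_of_mem_closure hx'
    exact hlist l hl
  exact ⟨U, hUopen, hWcomp.of_isClosed_subset (U.isClosed_of_isOpen hUopen) hUW,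
    hUW.trans ((hWsub.trans interior_subset).trans hKΩ)⟩

end AuxCOD

/-- Let `G` be a compactly generated locally compact group and `N` a discrete cocompact
normal subgroup.  Then the centralizer `C_G(N)` is an open normal subgroup of `G`, the
product `N · C_G(N)` is open and of finite index in `G`, and if `G` is moreover totally
disconnected then `G` has a compact open normal subgroup intersecting `N` trivially. -/
theorem centralizer_open_of_discrete_cocompact_normal
    {G : Type*} [Group G] [TopologicalSpace G] [IsTopologicalGroup G]
    [LocallyCompactSpace G] [T2Space G]
    (hcg : ∃ S : Set G, IsCompact S ∧ Subgroup.closure S = ⊤)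
    (N : Subgroup G) [N.Normal] (hNdisc : DiscreteTopology ↥N)
    (hNcc : IsCompact (Set.univ : Set (G ⧸ N))) :
    IsOpen ((Subgroup.centralizer (N : Set G) : Subgroup G) : Set G) ∧
      (Subgroup.centralizer (N : Set G)).Normal ∧
      IsOpen (((N ⊔ Subgroup.centralizer (N : Set G) : Subgroup G)) : Set G) ∧
      (N ⊔ Subgroup.centralizer (N : Set G)).index ≠ 0 ∧
      (TotallyDisconnectedSpace G →
        ∃ W : Subgroup G, W.Normal ∧ IsCompact (W : Set G) ∧ IsOpen (W : Set G) ∧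
          W ⊓ N = ⊥) := by
  obtain ⟨T, hTfin, hTN, hNT⟩ := auxCOD_fin_gen hcg N hNdisc hNcc
  set C : Subgroup G := Subgroup.centralizer (N : Set G) with hC
  have hCopen : IsOpen (C : Set G) := auxCOD_centralizer_open N hNdisc hTfin hTN hNT
  have hCnormal : C.Normal := by
    constructor
    intro c hc g
    refine Subgroup.mem_centralizer_iff.mpr (fun m hm => ?_)
    have hm' : g⁻¹ * m * g ∈ (N : Set G) := by
      have := Subgroup.Normal.conj_mem ‹N.Normal› m hm g⁻¹
      simpa using this
    have hcomm : (g⁻¹ * m * g) * c = c * (g⁻¹ * m * g) :=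
      Subgroup.mem_centralizer_iff.mp hc _ hm'
    calc m * (g * c * g⁻¹) = g * ((g⁻¹ * m * g) * c) * g⁻¹ := by group
      _ = g * (c * (g⁻¹ * m * g)) * g⁻¹ := by rw [hcomm]
      _ = g * c * g⁻¹ * m := by group
  have hNCopen : IsOpen ((N ⊔ C : Subgroup G) : Set G) :=
    Subgroup.isOpen_mono le_sup_right hCopen
  haveI hfin : Finite (G ⧸ (N ⊔ C : Subgroup G)) :=
    auxCOD_finite_quotient N (N ⊔ C) hNcc le_sup_left hNCopen
  refine ⟨hCopen, hCnormal, hNCopen, Subgroup.index_ne_zero_of_finite, ?_⟩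
  intro hTD
  -- totally disconnected case
  haveI hd : DiscreteTopology ((N : Set G) : Type _) := hNdisc
  obtain ⟨V₀', hV₀', hV₀N⟩ :=
    nhds_inter_eq_singleton_of_mem_discrete (isDiscrete_iff_discreteTopology.mpr hd) (N.one_mem : (1:G) ∈ (N : Set G))
  obtain ⟨V₀, hV₀sub, hV₀open, h1V₀⟩ := mem_nhds_iff.mp hV₀'
  have h1C : (1:G) ∈ (C : Set G) := C.one_mem
  obtain ⟨U, hUopen, hUcomp, hUsub⟩ :=
    auxCOD_vanDantzig (hV₀open.inter hCopen) ⟨h1V₀, h1C⟩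
  have hUC : (U : Set G) ⊆ (C : Set G) := fun x hx => (hUsub hx).2
  have hUN : ∀ x : G, x ∈ U → x ∈ N → x = 1 := by
    intro x hxU hxN
    have : x ∈ V₀' ∩ (N : Set G) := ⟨hV₀sub (hUsub hxU).1, hxN⟩
    rw [hV₀N] at this
    exact this
  set H : Subgroup G := N ⊔ U with hH
  have hHopen : IsOpen (H : Set G) := Subgroup.isOpen_mono le_sup_right hUopen
  haveI hHfin : Finite (G ⧸ H) := auxCOD_finite_quotient N H hNcc le_sup_left hHopen
  -- U is normal in H
  have hUnormalH : ∀ h ∈ H, ∀ u ∈ U, h * u * h⁻¹ ∈ U := by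
    intro h hh u hu
    have hh' : h ∈ ((N : Set G) * (U : Set G)) := by
      rw [← Subgroup.normal_mul N U]
      exact hh
    obtain ⟨n, hn, u', hu', rfl⟩ := hh'
    have hx : u' * u * u'⁻¹ ∈ U := by
      have := U.mul_mem (U.mul_mem hu' hu) (U.inv_mem hu')
      simpa [mul_assoc] using this
    have hcomm : n * (u' * u * u'⁻¹) = (u' * u * u'⁻¹) * n :=
      Subgroup.mem_centralizer_iff.mp (hUC hx) n hn
    have : (n * u') * u * (n * u')⁻¹ = u' * u * u'⁻¹ := by
      calc (n * u') * u * (n * u')⁻¹ = n * (u' * u * u'⁻¹) * n⁻¹ := by group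
        _ = (u' * u * u'⁻¹) * n * n⁻¹ := by rw [hcomm]
        _ = u' * u * u'⁻¹ := by group
    rw [this]
    exact hx
  -- the normal core of U is the desired subgroup
  set W : Subgroup G := U.normalCore with hW
  have hWopen : IsOpen (W : Set G) := by
    have hWeq : (W : Set G) =
        ⋂ q : G ⧸ H, (fun a : G => (Quotient.out q)⁻¹ * a * Quotient.out q) ⁻¹' (U : Set G) := by
      ext a
      simp only [Set.mem_iInter, Set.mem_preimage, SetLike.mem_coe]
      constructor
      · intro ha q
        have := ha (Quotient.out q)⁻¹
        simpa using this
      · intro ha b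
        obtain ⟨h, hd⟩ := QuotientGroup.mk_out_eq_mul H b⁻¹
        have key : (Quotient.out (QuotientGroup.mk b⁻¹ : G ⧸ H))⁻¹ * a *
            Quotient.out (QuotientGroup.mk b⁻¹ : G ⧸ H) ∈ U := ha _
        rw [hd] at key
        -- key : (b⁻¹ * h)⁻¹ * a * (b⁻¹ * h) ∈ U
        have key' : (h : G)⁻¹ * (b * a * b⁻¹) * h ∈ U := by
          have : (h : G)⁻¹ * (b * a * b⁻¹) * h = (b⁻¹ * h)⁻¹ * a * (b⁻¹ * h) := by group
          rw [this]
          exact key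
        have := hUnormalH h h.2 _ key'
        simpa [mul_assoc] using this
    rw [hWeq]
    exact isOpen_iInter_of_finite (fun q =>
      ((continuous_const.mul continuous_id).mul continuous_const).isOpen_preimage _ hUopen)
  refine ⟨W, Subgroup.normalCore_normal U, ?_, hWopen, ?_⟩
  · exact hUcomp.of_isClosed_subset (W.isClosed_of_isOpen hWopen) U.normalCore_le
  · rw [eq_bot_iff]
    intro x hx
    rw [Subgroup.mem_bot]
    exact hUN x (U.normalCore_le hx.1) hx.2
end
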